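/- For every α ∈ (0,1), every β ∈ (0,1/2), and every n > 0, as x₀ → +∞, ∫_{−∞}^{x₀^α} ∫_{x₀^β ≤ |x'| < ε (x₀−t)^{1/2}} | exp( −½ x'·Q x' + E(x', x₀ − t) ) | · | ν( t, x'/(x₀−t)^{1/2} ) | dx' dt = O(x₀^{−n}). -/

import Mathlib

open Metric MeasureTheory Filter Asymptotics
open scoped Topology

/-- truncation in `x'`: for `α ∈ (0,1)`, `β ∈ (0,1/2)` and `n > 0`,
`∫_{-∞}^{x₀^α} ∫_{x₀^β ≤ |x'| < ε√(x₀-t)} |exp(-½x'·Qx' + E(x',x₀-t))| |ν(t,x'/√(x₀-t))| dx' dt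
 = O(x₀^{-n})` as `x₀ → +∞`. -/
lemma aux_gauss_integrable {m : ℕ} {c : ℝ} (hc : 0 < c) :
    Integrable (fun x : EuclideanSpace ℝ (Fin m) => Real.exp (-c * ‖x‖ ^ 2)) := by
  have h := (GaussianFourier.integrable_cexp_neg_mul_sq_norm_add
    (V := EuclideanSpace ℝ (Fin m)) (b := (c : ℂ)) (by simpa using hc) 0 0).norm
  refine h.congr (Filter.Eventually.of_forall fun v => ?_)
  simp only [Complex.norm_exp]
  rw [show (-(c:ℂ) * ↑‖v‖ ^ 2 + 0 * ↑(inner ℝ (0:EuclideanSpace ℝ (Fin m)) v : ℝ)) = ((-c * ‖v‖ ^ 2 : ℝ) : ℂ) by push_cast; ring]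
  rw [Complex.ofReal_re]

lemma aux_decay {c β : ℝ} (hc : 0 < c) (hβ : 0 < β) (n : ℝ) :
    (fun x : ℝ => Real.exp (-c * (x ^ β) ^ 2)) =O[atTop] fun x : ℝ => x ^ (-n) := by
  have h1 : Tendsto (fun x : ℝ => x ^ (2 * β)) atTop atTop :=
    tendsto_rpow_atTop (by positivity)
  have h2 := (tendsto_rpow_mul_exp_neg_mul_atTop_nhds_zero (n / (2 * β)) c hc).comp h1
  have h3 : Tendsto (fun x : ℝ => x ^ n * Real.exp (-c * (x ^ β) ^ 2)) atTop (𝓝 0) := by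
    apply h2.congr'
    filter_upwards [eventually_gt_atTop (0 : ℝ)] with x hx
    have hb2 : (2 : ℝ) * β ≠ 0 := by positivity
    have e1 : (x ^ (2 * β)) ^ (n / (2 * β)) = x ^ n := by
      rw [← Real.rpow_mul hx.le, mul_div_cancel₀ _ hb2]
    have e2 : (x ^ β) ^ 2 = x ^ (2 * β) := by
      rw [← Real.rpow_natCast (x ^ β) 2, ← Real.rpow_mul hx.le]
      norm_num [mul_comm]
    simp only [Function.comp_apply, e1, e2]
  rw [isBigO_iff]
  refine ⟨1, ?_⟩
  have h4 := (Metric.tendsto_nhds.mp h3) 1 one_pos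
  filter_upwards [h4, eventually_gt_atTop (0 : ℝ)] with x hx hx0
  rw [Real.dist_eq, sub_zero] at hx
  have hxn : (0 : ℝ) < x ^ n := Real.rpow_pos_of_pos hx0 n
  have key : Real.exp (-c * (x ^ β) ^ 2) = x ^ (-n) * (x ^ n * Real.exp (-c * (x ^ β) ^ 2)) := by
    rw [← mul_assoc, ← Real.rpow_add hx0]
    simp
  rw [Real.norm_eq_abs, Real.norm_eq_abs, abs_of_pos (Real.exp_pos _),
    abs_of_pos (Real.rpow_pos_of_pos hx0 _), key, one_mul]
  have : x ^ n * Real.exp (-c * (x ^ β) ^ 2) ≤ 1 := (le_abs_self _).trans hx.le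
  nlinarith [Real.rpow_pos_of_pos hx0 (-n)]

set_option maxHeartbeats 2000000 in
theorem stmt_14 (d : ℕ) (hd : 2 ≤ d) (ε γ : ℝ) (hε : 0 < ε) (hγ : 0 < γ)
    (Q : Matrix (Fin (d - 1)) (Fin (d - 1)) ℝ) (hQsymm : Q.IsSymm) (hQpos : Q.PosDef)
    (hgamQ : ∀ v : EuclideanSpace ℝ (Fin (d - 1)),
      γ * ‖v‖ ^ 2 ≤ ∑ p, ∑ q, Q p q * v p * v q)
    (ν : ℝ × EuclideanSpace ℝ (Fin (d - 1)) → ℂ)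
    (hν : ContinuousOn ν {q : ℝ × EuclideanSpace ℝ (Fin (d - 1)) | ‖q.2‖ ≤ ε})
    (hνdecay : ∀ N : ℝ, 0 < N → ∃ C : ℝ, ∀ (t : ℝ) (ξ : EuclideanSpace ℝ (Fin (d - 1))),
      ‖ξ‖ ≤ ε → ‖ν (t, ξ)‖ ≤ C * (1 + |t|) ^ (-N))
    (Efun : EuclideanSpace ℝ (Fin (d - 1)) → ℝ → ℂ)
    (hE : ∀ τ : ℝ, 0 < τ → ∀ x' : EuclideanSpace ℝ (Fin (d - 1)),
      ‖x'‖ < ε * Real.sqrt τ →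
      -(1 / 2) * (∑ p, ∑ q, Q p q * x' p * x' q) + (Efun x' τ).re ≤ -(γ / 4) * ‖x'‖ ^ 2)
    (α β n : ℝ) (hα0 : 0 < α) (hα1 : α < 1) (hβ0 : 0 < β) (hβ1 : β < 1 / 2) (hn : 0 < n) :
    (fun x₀ : ℝ =>
      ∫ t in Set.Iic (x₀ ^ α),
        ∫ x' in {x' : EuclideanSpace ℝ (Fin (d - 1)) | x₀ ^ β ≤ ‖x'‖} ∩
            ball (0 : EuclideanSpace ℝ (Fin (d - 1))) (ε * Real.sqrt (x₀ - t)),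
          ‖Complex.exp (-(1 / 2 : ℂ) * (∑ p, ∑ q, (Q p q : ℂ) * x' p * x' q) +
              Efun x' (x₀ - t))‖ *
            ‖ν (t, (Real.sqrt (x₀ - t))⁻¹ • x')‖)
      =O[atTop] fun x₀ : ℝ => x₀ ^ (-n) := by
  obtain ⟨C, hC⟩ := hνdecay 2 two_pos
  set C₀ : ℝ := max C 0 with hC₀def
  have hC₀0 : 0 ≤ C₀ := le_max_right C 0
  have hC₀ : ∀ (t : ℝ) (ξ : EuclideanSpace ℝ (Fin (d - 1))), ‖ξ‖ ≤ ε → ‖ν (t, ξ)‖ ≤ C₀ * (1 + t ^ 2)⁻¹ := by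
    intro t ξ hξ
    have h1 : ‖ν (t, ξ)‖ ≤ C₀ * (1 + |t|) ^ (-(2:ℝ)) :=
      (hC t ξ hξ).trans (mul_le_mul_of_nonneg_right (le_max_left C 0)
        (Real.rpow_nonneg (by positivity) _))
    refine h1.trans (mul_le_mul_of_nonneg_left ?_ hC₀0)
    rw [Real.rpow_neg (by positivity), show ((2:ℝ)) = ((2:ℕ):ℝ) by norm_num,
      Real.rpow_natCast]
    apply inv_anti₀ (by positivity)
    nlinarith [abs_nonneg t, sq_abs t]
  set c : ℝ := γ / 8 with hcdef
  have hc : 0 < c := by positivity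
  have hGint : Integrable (fun x : EuclideanSpace ℝ (Fin (d - 1)) => Real.exp (-c * ‖x‖ ^ 2)) := aux_gauss_integrable hc
  set G : ℝ := ∫ x : EuclideanSpace ℝ (Fin (d - 1)), Real.exp (-c * ‖x‖ ^ 2) with hGdef
  have hG0 : 0 ≤ G := integral_nonneg fun x => (Real.exp_pos _).le
  have hIint : Integrable (fun t : ℝ => (1 + t ^ 2)⁻¹) := integrable_inv_one_add_sq
  set I : ℝ := ∫ t : ℝ, (1 + t ^ 2)⁻¹ with hIdef
  have hI0 : 0 ≤ I := integral_nonneg fun t => by positivity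
  have Smeas : ∀ (x₀ t : ℝ), MeasurableSet ({x' : EuclideanSpace ℝ (Fin (d - 1)) | x₀ ^ β ≤ ‖x'‖} ∩
      ball (0 : EuclideanSpace ℝ (Fin (d - 1))) (ε * Real.sqrt (x₀ - t))) :=
    fun x₀ t => (measurableSet_le measurable_const measurable_norm).inter measurableSet_ball
  have key : ∀ x₀ : ℝ, 1 ≤ x₀ →
      (∫ t in Set.Iic (x₀ ^ α),
        ∫ x' in {x' : EuclideanSpace ℝ (Fin (d - 1)) | x₀ ^ β ≤ ‖x'‖} ∩ ball (0 : EuclideanSpace ℝ (Fin (d - 1))) (ε * Real.sqrt (x₀ - t)),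
          ‖Complex.exp (-(1 / 2 : ℂ) * (∑ p, ∑ q, (Q p q : ℂ) * x' p * x' q) +
              Efun x' (x₀ - t))‖ * ‖ν (t, (Real.sqrt (x₀ - t))⁻¹ • x')‖) ≤
      (C₀ * I * G) * Real.exp (-c * (x₀ ^ β) ^ 2) := by
    intro x₀ hx₀
    have hb0 : 0 ≤ x₀ ^ β := Real.rpow_nonneg (by linarith) β
    have step1 : ∀ t : ℝ,
        (∫ x' in {x' : EuclideanSpace ℝ (Fin (d - 1)) | x₀ ^ β ≤ ‖x'‖} ∩ ball (0 : EuclideanSpace ℝ (Fin (d - 1))) (ε * Real.sqrt (x₀ - t)),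
          ‖Complex.exp (-(1 / 2 : ℂ) * (∑ p, ∑ q, (Q p q : ℂ) * x' p * x' q) +
              Efun x' (x₀ - t))‖ * ‖ν (t, (Real.sqrt (x₀ - t))⁻¹ • x')‖) ≤
        ((C₀ * G * Real.exp (-c * (x₀ ^ β) ^ 2)) * (1 + t ^ 2)⁻¹) := by
      intro t
      have hconst : (0:ℝ) ≤ C₀ * (1 + t ^ 2)⁻¹ * Real.exp (-c * (x₀ ^ β) ^ 2) := by
        have : (0:ℝ) ≤ (1 + t ^ 2)⁻¹ := by positivity
        exact mul_nonneg (mul_nonneg hC₀0 this) (Real.exp_pos _).le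
      have hgint : Integrable (fun x' : EuclideanSpace ℝ (Fin (d - 1)) =>
          (C₀ * (1 + t ^ 2)⁻¹ * Real.exp (-c * (x₀ ^ β) ^ 2)) * Real.exp (-c * ‖x'‖ ^ 2)) :=
        hGint.const_mul _
      calc (∫ x' in {x' : EuclideanSpace ℝ (Fin (d - 1)) | x₀ ^ β ≤ ‖x'‖} ∩ ball (0 : EuclideanSpace ℝ (Fin (d - 1))) (ε * Real.sqrt (x₀ - t)),
          ‖Complex.exp (-(1 / 2 : ℂ) * (∑ p, ∑ q, (Q p q : ℂ) * x' p * x' q) +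
              Efun x' (x₀ - t))‖ * ‖ν (t, (Real.sqrt (x₀ - t))⁻¹ • x')‖)
          ≤ ∫ x' in {x' : EuclideanSpace ℝ (Fin (d - 1)) | x₀ ^ β ≤ ‖x'‖} ∩ ball (0 : EuclideanSpace ℝ (Fin (d - 1))) (ε * Real.sqrt (x₀ - t)),
            (C₀ * (1 + t ^ 2)⁻¹ * Real.exp (-c * (x₀ ^ β) ^ 2)) *
              Real.exp (-c * ‖x'‖ ^ 2) := by
            apply integral_mono_of_nonneg
              (Filter.Eventually.of_forall fun x => mul_nonneg (norm_nonneg _) (norm_nonneg _))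
              hgint.restrict
            apply ae_restrict_of_forall_mem (Smeas x₀ t)
            rintro x' ⟨hx1, hx2⟩
            rw [mem_ball_zero_iff] at hx2
            have hx1' : x₀ ^ β ≤ ‖x'‖ := hx1
            have hst : 0 < Real.sqrt (x₀ - t) := by
              rcases le_or_gt (Real.sqrt (x₀ - t)) 0 with h | h
              · nlinarith [norm_nonneg x', mul_nonpos_of_nonneg_of_nonpos hε.le h]
              · exact h
            have hτ : 0 < x₀ - t := Real.sqrt_pos.mp hst
            have hre := hE _ hτ x' hx2
            have h1 : ‖Complex.exp (-(1 / 2 : ℂ) * (∑ p, ∑ q, (Q p q : ℂ) * x' p * x' q) +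
                Efun x' (x₀ - t))‖ ≤ Real.exp (-(γ / 4) * ‖x'‖ ^ 2) := by
              rw [show (-(1 / 2 : ℂ) * (∑ p, ∑ q, (Q p q : ℂ) * x' p * x' q)) =
                  ((-(1 / 2) * (∑ p, ∑ q, Q p q * x' p * x' q) : ℝ) : ℂ) by push_cast; ring]
              rw [Complex.norm_exp]
              apply Real.exp_le_exp.mpr
              simpa [Complex.add_re, Complex.ofReal_re] using hre
            have h2 : ‖ν (t, (Real.sqrt (x₀ - t))⁻¹ • x')‖ ≤ C₀ * (1 + t ^ 2)⁻¹ := by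
              apply hC₀
              rw [norm_smul, Real.norm_eq_abs, abs_of_pos (inv_pos.mpr hst),
                inv_mul_le_iff₀ hst]
              linarith
            have h3 : Real.exp (-(γ / 4) * ‖x'‖ ^ 2) ≤
                Real.exp (-c * (x₀ ^ β) ^ 2) * Real.exp (-c * ‖x'‖ ^ 2) := by
              rw [← Real.exp_add]
              apply Real.exp_le_exp.mpr
              have hsq : (x₀ ^ β) ^ 2 ≤ ‖x'‖ ^ 2 := by nlinarith [norm_nonneg x']
              rw [hcdef]; nlinarith
            calc ‖Complex.exp (-(1 / 2 : ℂ) * (∑ p, ∑ q, (Q p q : ℂ) * x' p * x' q) +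
                Efun x' (x₀ - t))‖ * ‖ν (t, (Real.sqrt (x₀ - t))⁻¹ • x')‖
                ≤ Real.exp (-(γ / 4) * ‖x'‖ ^ 2) * (C₀ * (1 + t ^ 2)⁻¹) :=
                  mul_le_mul h1 h2 (norm_nonneg _) (Real.exp_pos _).le
              _ ≤ (Real.exp (-c * (x₀ ^ β) ^ 2) * Real.exp (-c * ‖x'‖ ^ 2)) *
                    (C₀ * (1 + t ^ 2)⁻¹) := by
                  apply mul_le_mul_of_nonneg_right h3
                  positivity
              _ = (C₀ * (1 + t ^ 2)⁻¹ * Real.exp (-c * (x₀ ^ β) ^ 2)) *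
                    Real.exp (-c * ‖x'‖ ^ 2) := by ring
        _ ≤ ∫ x' : EuclideanSpace ℝ (Fin (d - 1)), (C₀ * (1 + t ^ 2)⁻¹ * Real.exp (-c * (x₀ ^ β) ^ 2)) *
              Real.exp (-c * ‖x'‖ ^ 2) :=
            setIntegral_le_integral hgint (Filter.Eventually.of_forall fun x =>
              mul_nonneg hconst (Real.exp_pos _).le)
        _ = (C₀ * (1 + t ^ 2)⁻¹ * Real.exp (-c * (x₀ ^ β) ^ 2)) * G := by
            rw [integral_const_mul]
        _ = (C₀ * G * Real.exp (-c * (x₀ ^ β) ^ 2)) * (1 + t ^ 2)⁻¹ := by ring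
    have hhint : Integrable (fun t : ℝ =>
        (C₀ * G * Real.exp (-c * (x₀ ^ β) ^ 2)) * (1 + t ^ 2)⁻¹) := hIint.const_mul _
    calc (∫ t in Set.Iic (x₀ ^ α),
        ∫ x' in {x' : EuclideanSpace ℝ (Fin (d - 1)) | x₀ ^ β ≤ ‖x'‖} ∩ ball (0 : EuclideanSpace ℝ (Fin (d - 1))) (ε * Real.sqrt (x₀ - t)),
          ‖Complex.exp (-(1 / 2 : ℂ) * (∑ p, ∑ q, (Q p q : ℂ) * x' p * x' q) +
              Efun x' (x₀ - t))‖ * ‖ν (t, (Real.sqrt (x₀ - t))⁻¹ • x')‖)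
        ≤ ∫ t in Set.Iic (x₀ ^ α),
            (C₀ * G * Real.exp (-c * (x₀ ^ β) ^ 2)) * (1 + t ^ 2)⁻¹ := by
          apply integral_mono_of_nonneg ?_ hhint.restrict
            (Filter.Eventually.of_forall step1)
          exact Filter.Eventually.of_forall fun t => setIntegral_nonneg (Smeas x₀ t)
            fun x _ => mul_nonneg (norm_nonneg _) (norm_nonneg _)
      _ ≤ ∫ t : ℝ, (C₀ * G * Real.exp (-c * (x₀ ^ β) ^ 2)) * (1 + t ^ 2)⁻¹ := by
          apply setIntegral_le_integral hhint
          apply Filter.Eventually.of_forall fun t => ?_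
          have h1 : (0:ℝ) ≤ (1 + t ^ 2)⁻¹ := by positivity
          exact mul_nonneg (mul_nonneg (mul_nonneg hC₀0 hG0) (Real.exp_pos _).le) h1
      _ = (C₀ * G * Real.exp (-c * (x₀ ^ β) ^ 2)) * I := by rw [integral_const_mul]
      _ = (C₀ * I * G) * Real.exp (-c * (x₀ ^ β) ^ 2) := by ring
  have hO1 : (fun x₀ : ℝ =>
      ∫ t in Set.Iic (x₀ ^ α),
        ∫ x' in {x' : EuclideanSpace ℝ (Fin (d - 1)) | x₀ ^ β ≤ ‖x'‖} ∩ ball (0 : EuclideanSpace ℝ (Fin (d - 1))) (ε * Real.sqrt (x₀ - t)),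
          ‖Complex.exp (-(1 / 2 : ℂ) * (∑ p, ∑ q, (Q p q : ℂ) * x' p * x' q) +
              Efun x' (x₀ - t))‖ * ‖ν (t, (Real.sqrt (x₀ - t))⁻¹ • x')‖)
      =O[atTop] fun x₀ : ℝ => Real.exp (-c * (x₀ ^ β) ^ 2) := by
    rw [isBigO_iff]
    refine ⟨C₀ * I * G, ?_⟩
    filter_upwards [eventually_ge_atTop (1 : ℝ)] with x₀ hx₀
    have hF0 : (0:ℝ) ≤ ∫ t in Set.Iic (x₀ ^ α),
        ∫ x' in {x' : EuclideanSpace ℝ (Fin (d - 1)) | x₀ ^ β ≤ ‖x'‖} ∩ ball (0 : EuclideanSpace ℝ (Fin (d - 1))) (ε * Real.sqrt (x₀ - t)),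
          ‖Complex.exp (-(1 / 2 : ℂ) * (∑ p, ∑ q, (Q p q : ℂ) * x' p * x' q) +
              Efun x' (x₀ - t))‖ * ‖ν (t, (Real.sqrt (x₀ - t))⁻¹ • x')‖ :=
      setIntegral_nonneg measurableSet_Iic fun t _ => setIntegral_nonneg (Smeas x₀ t)
        fun x _ => mul_nonneg (norm_nonneg _) (norm_nonneg _)
    rw [Real.norm_eq_abs, Real.norm_eq_abs, abs_of_nonneg hF0,
      abs_of_pos (Real.exp_pos _)]
    exact key x₀ hx₀
  exact hO1.trans (aux_decay hc hβ0 n)
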